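/- Let y : ℤ → ℝ be a sequence of positive reals satisfying the q-Painlevé II recurrence y_{n+5} y_n (1/y_{n+3} + 1)(1/y_{n+2} + 1) = (y_{n+4} + 1)(y_{n+1} + 1) for all n ∈ ℤ. Define c := y_4 (1/y_1 + 1) / (y_0 (1/y_3 + 1)) and v_n := y_{n+2} y_n / (1/y_{n+1} + 1). Then v_{n+2} = c v_n for all n ∈ ℤ. -/

import Mathlib

/-- For positive solutions of the q-Painlevé II recurrence, the quantity
`v n := y (n+2) * y n / (1/y (n+1) + 1)` satisfies `v (n+2) = c * v n`, where
`c := y 4 * (1/y 1 + 1) / (y 0 * (1/y 3 + 1))`. -/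
theorem qPII_v_recursion
    (y : ℤ → ℝ) (hy : ∀ n : ℤ, 0 < y n)
    (hrec : ∀ n : ℤ,
      y (n + 5) * y n * (1 / y (n + 3) + 1) * (1 / y (n + 2) + 1) =
        (y (n + 4) + 1) * (y (n + 1) + 1))
    (c : ℝ) (hc : c = y 4 * (1 / y 1 + 1) / (y 0 * (1 / y 3 + 1)))
    (v : ℤ → ℝ) (hv : ∀ n : ℤ, v n = y (n + 2) * y n / (1 / y (n + 1) + 1)) :
    ∀ n : ℤ, v (n + 2) = c * v n := by
  have hne : ∀ m : ℤ, y m ≠ 0 := fun m => (hy m).ne'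
  have hpd : ∀ m : ℤ, 0 < 1 / y m + 1 := by
    intro m
    have := one_div_pos.mpr (hy m)
    linarith
  -- cross-multiplied invariance of w m := y (m+4) * (1/y(m+1)+1) / (y m * (1/y(m+3)+1))
  have cross : ∀ m : ℤ,
      y (m + 5) * (1 / y (m + 2) + 1) * (y m * (1 / y (m + 3) + 1)) =
        y (m + 4) * (1 / y (m + 1) + 1) * (y (m + 1) * (1 / y (m + 4) + 1)) := by
    intro m
    have h := hrec m
    have A : y (m + 1) * (1 / y (m + 1) + 1) = y (m + 1) + 1 := by
      rw [mul_add, mul_one_div, div_self (hne (m + 1)), mul_one, add_comm]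
    have B : y (m + 4) * (1 / y (m + 4) + 1) = y (m + 4) + 1 := by
      rw [mul_add, mul_one_div, div_self (hne (m + 4)), mul_one, add_comm]
    have hR : y (m + 4) * (1 / y (m + 1) + 1) * (y (m + 1) * (1 / y (m + 4) + 1)) =
        (y (m + 1) * (1 / y (m + 1) + 1)) * (y (m + 4) * (1 / y (m + 4) + 1)) := by ring
    rw [hR, A, B]
    linear_combination h
  have hden : ∀ m : ℤ, y m * (1 / y (m + 3) + 1) ≠ 0 :=
    fun m => (mul_pos (hy m) (hpd (m + 3))).ne'
  have wstep : ∀ m : ℤ,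
      y (m + 1 + 4) * (1 / y (m + 1 + 1) + 1) / (y (m + 1) * (1 / y (m + 1 + 3) + 1)) =
        y (m + 4) * (1 / y (m + 1) + 1) / (y m * (1 / y (m + 3) + 1)) := by
    intro m
    rw [div_eq_div_iff (hden (m + 1)) (hden m)]
    have e1 : m + 1 + 4 = m + 5 := by ring
    have e2 : m + 1 + 1 = m + 2 := by ring
    have e3 : m + 1 + 3 = m + 4 := by ring
    rw [e1, e2, e3]
    linear_combination cross m
  have wconst : ∀ m : ℤ,
      y (m + 4) * (1 / y (m + 1) + 1) / (y m * (1 / y (m + 3) + 1)) = c := by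
    intro m
    induction m using Int.induction_on with
    | zero => rw [hc]; norm_num
    | succ k ih => rw [wstep k]; exact ih
    | pred k ih =>
        have hs := wstep (-(k : ℤ) - 1)
        have a1 : (-(k : ℤ) - 1 + 1 + 4) = -(k : ℤ) + 4 := by ring
        have a2 : (-(k : ℤ) - 1 + 1 + 1) = -(k : ℤ) + 1 := by ring
        have a3 : (-(k : ℤ) - 1 + 1 + 3) = -(k : ℤ) + 3 := by ring
        have a4 : (-(k : ℤ) - 1 + 1) = -(k : ℤ) := by ring
        rw [a1, a2, a3, a4] at hs
        rw [a4, ← hs]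
        exact ih
  intro n
  have hw := wconst n
  rw [hv (n + 2), hv n, ← hw]
  have e1 : n + 2 + 2 = n + 4 := by ring
  have e2 : n + 2 + 1 = n + 3 := by ring
  rw [e1, e2]
  have p1 : (1 / y (n + 1) + 1) ≠ 0 := (hpd (n + 1)).ne'
  have p3 : (1 / y (n + 3) + 1) ≠ 0 := (hpd (n + 3)).ne'
  have D : y n * (1 / y (n + 3) + 1) * (1 / y (n + 1) + 1) ≠ 0 :=
    (mul_pos (mul_pos (hy n) (hpd (n + 3))) (hpd (n + 1))).ne'
  rw [div_mul_div_comm, div_eq_div_iff p3 D]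
  ring
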